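/- Suppose s < 1, let f ∈ C** be the unique fixed point of the Read–Bajraktarević operator T, assume each l_n is Lipschitz with constant λ_l < 1 and S : I → [−s, s] is Lipschitz. Then the IFS W = (I × ℝ; w_1, …, w_N), where w_n(x, y) = (l_n(x), h(l_n(x)) + S(l_n(x))(y − b(x))), has a unique attractor, namely the graph Γ(f) = {(x, f(x)) : x ∈ I} of f, and the basin of attraction is all of I × ℝ: W(Γ(f)) = Γ(f) and W^k(B) → Γ(f) in the Hausdorff metric for every nonempty compact B ⊆ I × ℝ. -/

import Mathlib

open Set Filter Metric

/-- The Read–Bajraktarević operator `Tg = h + S · (g ∘ L − b ∘ L)`. -/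
def RBop (S L b h : ℝ → ℝ) (g : ℝ → ℝ) : ℝ → ℝ :=
  fun x => h x + S x * (g (L x) - b (L x))

/-- The maps `w_n(x, y) = (lₙ(x), h(lₙ(x)) + S(lₙ(x))(y − b(x)))` of the IFS `W`. -/
def ifsW (S b h : ℝ → ℝ) (l : ℕ → ℝ → ℝ) (n : ℕ) (p : ℝ × ℝ) : ℝ × ℝ :=
  (l n p.1, h (l n p.1) + S (l n p.1) * (p.2 - b p.1))

/-- The set map `B ↦ ⋃_{n=1}^N w_n(B)` of the IFS `W`. -/
def ifsWSet (S b h : ℝ → ℝ) (l : ℕ → ℝ → ℝ) (N : ℕ) (B : Set (ℝ × ℝ)) : Set (ℝ × ℝ) :=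
  ⋃ n ∈ Finset.Icc 1 N, (ifsW S b h l n) '' B

/-- Suppose `s < 1`, let `f ∈ C**` be the unique fixed point of the
Read–Bajraktarević operator `T`, assume each `lₙ` is Lipschitz with constant `λ_l < 1`
and `S : I → [−s, s]` is Lipschitz.  Then the IFS `W = (I × ℝ; w₁, …, w_N)` has a unique
attractor, namely the graph `Γ(f)` of `f`, and the basin of attraction is all of
`I × ℝ`: `W(Γ(f)) = Γ(f)` and `W^k(B) → Γ(f)` in the Hausdorff metric for every
nonempty compact `B ⊆ I × ℝ`. -/
theorem graph_is_unique_attractor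
    (N : ℕ) (hN : 0 < N) (X Y : ℕ → ℝ)
    (hX : ∀ j, j < N → X j < X (j + 1))
    (l : ℕ → ℝ → ℝ)
    (hl : ∀ n, 1 ≤ n → n ≤ N → ContinuousOn (l n) (Icc (X 0) (X N)) ∧
      Set.BijOn (l n) (Icc (X 0) (X N)) (Icc (X (n - 1)) (X n)))
    (L : ℝ → ℝ)
    (hLI : Set.MapsTo L (Icc (X 0) (X N)) (Icc (X 0) (X N)))
    (hL : ∀ n, 1 ≤ n → n ≤ N → ∀ x ∈ Ico (X (n - 1)) (X n), l n (L x) = x)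
    (hLN : l N (L (X N)) = X N)
    (S : ℝ → ℝ) (s : ℝ) (hs : s < 1)
    (hSb : ∀ x ∈ Icc (X 0) (X N), |S x| ≤ s)
    (b h : ℝ → ℝ)
    (hbC : ContinuousOn b (Icc (X 0) (X N)))
    (hb0 : b (X 0) = Y 0) (hbN : b (X N) = Y N)
    (hhC : ContinuousOn h (Icc (X 0) (X N)))
    (hh : ∀ j ≤ N, h (X j) = Y j)
    -- `f ∈ C**` is the fixed point of `T`
    (f : ℝ → ℝ)
    (hfC : ContinuousOn f (Icc (X 0) (X N)))
    (hfi : ∀ j ≤ N, f (X j) = Y j)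
    (hfix : ∀ x ∈ Icc (X 0) (X N), RBop S L b h f x = f x)
    -- Lipschitz constants
    (lamL : ℝ) (hlamL1 : lamL < 1)
    (hlipL : ∀ n, 1 ≤ n → n ≤ N → ∀ x₁ ∈ Icc (X 0) (X N), ∀ x₂ ∈ Icc (X 0) (X N),
      |l n x₁ - l n x₂| ≤ lamL * |x₁ - x₂|)
    (lamS : ℝ) (hlamS0 : 0 ≤ lamS)
    (hlipS : ∀ x₁ ∈ Icc (X 0) (X N), ∀ x₂ ∈ Icc (X 0) (X N),
      |S x₁ - S x₂| ≤ lamS * |x₁ - x₂|) :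
    -- the graph of `f` is invariant
    ifsWSet S b h l N {p : ℝ × ℝ | p.1 ∈ Icc (X 0) (X N) ∧ p.2 = f p.1} =
      {p : ℝ × ℝ | p.1 ∈ Icc (X 0) (X N) ∧ p.2 = f p.1} ∧
    -- every nonempty compact subset of `I × ℝ` is attracted to the graph of `f`
    (∀ B : Set (ℝ × ℝ), B.Nonempty → IsCompact B → B ⊆ Icc (X 0) (X N) ×ˢ univ →
      Tendsto
        (fun k => hausdorffDist ((ifsWSet S b h l N)^[k] B)
          {p : ℝ × ℝ | p.1 ∈ Icc (X 0) (X N) ∧ p.2 = f p.1})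
        atTop (nhds 0)) ∧
    -- the graph of `f` is the unique attractor of `W`
    (∀ A : Set (ℝ × ℝ), A.Nonempty → IsCompact A → A ⊆ Icc (X 0) (X N) ×ˢ univ →
      ifsWSet S b h l N A = A →
      (∃ U : Set (ℝ × ℝ), IsOpen U ∧ A ⊆ U ∧
        ∀ B : Set (ℝ × ℝ), B.Nonempty → IsCompact B →
          B ⊆ U ∩ Icc (X 0) (X N) ×ˢ univ →
          Tendsto (fun k => hausdorffDist ((ifsWSet S b h l N)^[k] B) A)
            atTop (nhds 0)) →
      A = {p : ℝ × ℝ | p.1 ∈ Icc (X 0) (X N) ∧ p.2 = f p.1}) := by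
  classical
  -- basic monotonicity of the knots
  have Xlt : ∀ i j, i < j → j ≤ N → X i < X j := by
    intro i j hij hjN
    induction j with
    | zero => omega
    | succ j ih =>
      rcases Nat.lt_succ_iff_lt_or_eq.mp hij with hc | hc
      · exact (ih hc (by omega)).trans (hX j (by omega))
      · subst hc; exact hX i (by omega)
  have Xle : ∀ i j, i ≤ j → j ≤ N → X i ≤ X j := by
    intro i j hij hjN
    rcases eq_or_lt_of_le hij with rfl | hc
    · exact le_rfl
    · exact (Xlt i j hc hjN).le
  have hX0N : X 0 < X N := Xlt 0 N hN le_rfl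
  have hIcc_sub : ∀ n, 1 ≤ n → n ≤ N → Icc (X (n - 1)) (X n) ⊆ Icc (X 0) (X N) :=
    fun n h1 h2 => Icc_subset_Icc (Xle 0 (n - 1) (by omega) (by omega)) (Xle n N h2 le_rfl)
  have hX0I : X 0 ∈ Icc (X 0) (X N) := ⟨le_rfl, hX0N.le⟩
  have hXNI : X N ∈ Icc (X 0) (X N) := ⟨hX0N.le, le_rfl⟩
  have hs0 : 0 ≤ s := le_trans (abs_nonneg _) (hSb (X 0) hX0I)
  have hlamL0 : 0 ≤ lamL := by
    have h1 := hlipL N (by omega) le_rfl (X 0) hX0I (X N) hXNI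
    have h2 : 0 < |X 0 - X N| := abs_pos.mpr (by linarith)
    nlinarith [abs_nonneg (l N (X 0) - l N (X N))]
  -- covering lemma
  have hcover : ∀ x, X 0 ≤ x → x < X N →
      ∃ n, 1 ≤ n ∧ n ≤ N ∧ X (n - 1) ≤ x ∧ x < X n := by
    intro x hx0 hxN
    set j := Nat.findGreatest (fun m => X m ≤ x) N with hj
    have hPj : X j ≤ x := Nat.findGreatest_spec (P := fun m => X m ≤ x) (Nat.zero_le N) hx0
    have hjN : j ≤ N := Nat.findGreatest_le N
    have hjltN : j < N := by
      rcases eq_or_lt_of_le hjN with hc | hc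
      · exfalso; rw [hc] at hPj; linarith
      · exact hc
    refine ⟨j + 1, by omega, by omega, by simpa using hPj, ?_⟩
    by_contra hcon
    push_neg at hcon
    exact Nat.findGreatest_is_greatest (P := fun m => X m ≤ x) (n := N)
      (by omega) (by omega) hcon
  -- endpoint lemma
  have hend : ∀ n, 1 ≤ n → n ≤ N → ∀ x ∈ Icc (X 0) (X N),
      (l n x = X (n - 1) ∨ l n x = X n) → f x - b x = 0 := by
    intro n h1 h2 x hx hcase
    obtain ⟨hc, hbij⟩ := hl n h1 h2
    have hend0 : x = X 0 ∨ x = X N := by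
      have hinj := hbij.injOn
      rcases ContinuousOn.strictMonoOn_of_injOn_Icc' hX0N.le hc hinj with hm | ha
      · -- monotone : l n (X 0) = X (n-1), l n (X N) = X n
        have e0 : l n (X 0) = X (n - 1) := by
          obtain ⟨z, hz, hz2⟩ := hbij.surjOn ⟨le_rfl, Xle (n-1) n (by omega) h2⟩
          have := hm.monotoneOn hX0I hz hz.1
          have := (hbij.mapsTo hX0I).1
          linarith
        have eN : l n (X N) = X n := by
          obtain ⟨z, hz, hz2⟩ := hbij.surjOn ⟨Xle (n-1) n (by omega) h2, le_rfl⟩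
          have := hm.monotoneOn hz hXNI hz.2
          have := (hbij.mapsTo hXNI).2
          linarith
        rcases hcase with hc1 | hc1
        · exact Or.inl (hinj hx hX0I (by rw [hc1, e0]))
        · exact Or.inr (hinj hx hXNI (by rw [hc1, eN]))
      · -- antitone : l n (X 0) = X n, l n (X N) = X (n-1)
        have e0 : l n (X 0) = X n := by
          obtain ⟨z, hz, hz2⟩ := hbij.surjOn ⟨Xle (n-1) n (by omega) h2, le_rfl⟩
          have := ha.antitoneOn hX0I hz hz.1
          have := (hbij.mapsTo hX0I).2
          linarith
        have eN : l n (X N) = X (n - 1) := by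
          obtain ⟨z, hz, hz2⟩ := hbij.surjOn ⟨le_rfl, Xle (n-1) n (by omega) h2⟩
          have := ha.antitoneOn hz hXNI hz.2
          have := (hbij.mapsTo hXNI).1
          linarith
        rcases hcase with hc1 | hc1
        · exact Or.inr (hinj hx hXNI (by rw [hc1, eN]))
        · exact Or.inl (hinj hx hX0I (by rw [hc1, e0]))
    rcases hend0 with rfl | rfl
    · rw [hfi 0 (Nat.zero_le N), hb0]; ring
    · rw [hfi N le_rfl, hbN]; ring
  -- key transported fixed-point identity
  have hkey : ∀ n, 1 ≤ n → n ≤ N → ∀ x ∈ Icc (X 0) (X N),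
      f (l n x) = h (l n x) + S (l n x) * (f x - b x) := by
    intro n h1 h2 x hx
    obtain ⟨hc, hbij⟩ := hl n h1 h2
    have hy : l n x ∈ Icc (X (n - 1)) (X n) := hbij.mapsTo hx
    have hyI : l n x ∈ Icc (X 0) (X N) := hIcc_sub n h1 h2 hy
    have hfy := hfix (l n x) hyI
    simp only [RBop] at hfy
    rcases lt_or_eq_of_le hy.2 with hlt | he
    · have hLeq : l n (L (l n x)) = l n x := hL n h1 h2 (l n x) ⟨hy.1, hlt⟩
      have hLx : L (l n x) = x := hbij.injOn (hLI hyI) hx hLeq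
      rw [hLx] at hfy
      linarith
    · by_cases hyN : l n x = X N
      · have hnN : n = N := by
          by_contra hcon
          have : X n < X N := Xlt n N (by omega) le_rfl
          rw [← he, hyN] at this; linarith
        have hLeq : l n (L (l n x)) = l n x := by rw [hyN, hnN]; exact hLN
        have hLx : L (l n x) = x := hbij.injOn (hLI hyI) hx hLeq
        rw [hLx] at hfy
        linarith
      · have hnltN : n < N := by
          rcases eq_or_lt_of_le h2 with hc' | hc'
          · exact absurd (by rw [he, hc']) hyN
          · exact hc'
        have hIco : l n x ∈ Ico (X n) (X (n + 1)) := ⟨he.ge, by rw [he]; exact hX n hnltN⟩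
        have hLeq : l (n + 1) (L (l n x)) = l n x := hL (n + 1) (by omega) (by omega) _ hIco
        have h3 : f (L (l n x)) - b (L (l n x)) = 0 :=
          hend (n + 1) (by omega) (by omega) _ (hLI hyI) (Or.inl (by simpa using hLeq.trans he))
        have h4 : f x - b x = 0 := hend n h1 h2 x hx (Or.inr he)
        rw [h3] at hfy
        rw [h4]
        linarith
  -- membership in the IFS set map
  have memW : ∀ (B : Set (ℝ × ℝ)) (p : ℝ × ℝ), p ∈ ifsWSet S b h l N B ↔
      ∃ n, 1 ≤ n ∧ n ≤ N ∧ ∃ q ∈ B, ifsW S b h l n q = p := by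
    intro B p
    simp only [ifsWSet, Set.mem_iUnion, Finset.mem_Icc, Set.mem_image, exists_prop]
    constructor
    · rintro ⟨n, ⟨h1, h2⟩, q, hq, he⟩
      exact ⟨n, h1, h2, q, hq, he⟩
    · rintro ⟨n, h1, h2, q, hq, he⟩
      exact ⟨n, ⟨h1, h2⟩, q, hq, he⟩
  -- the iterates stay inside I × ℝ
  have hinv : ∀ (B : Set (ℝ × ℝ)), B ⊆ Icc (X 0) (X N) ×ˢ univ → ∀ k,
      (ifsWSet S b h l N)^[k] B ⊆ Icc (X 0) (X N) ×ˢ univ := by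
    intro B hB k
    induction k with
    | zero => simpa using hB
    | succ k ih =>
      rw [Function.iterate_succ_apply']
      intro p hp
      obtain ⟨n, h1, h2, q, hq, rfl⟩ := (memW _ p).mp hp
      refine ⟨hIcc_sub n h1 h2 ((hl n h1 h2).2.mapsTo (ih hq).1), trivial⟩
  -- vertical contraction
  have hvert : ∀ (B : Set (ℝ × ℝ)), B ⊆ Icc (X 0) (X N) ×ˢ univ → ∀ M : ℝ,
      (∀ p ∈ B, |p.2 - f p.1| ≤ M) → ∀ k, ∀ p ∈ (ifsWSet S b h l N)^[k] B,
      |p.2 - f p.1| ≤ s ^ k * M := by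
    intro B hB M hM k
    induction k with
    | zero => simpa using hM
    | succ k ih =>
      rw [Function.iterate_succ_apply']
      intro p hp
      obtain ⟨n, h1, h2, q, hq, rfl⟩ := (memW _ p).mp hp
      have hq1 : q.1 ∈ Icc (X 0) (X N) := (hinv B hB k hq).1
      have hkq := hkey n h1 h2 q.1 hq1
      have hSle : |S (l n q.1)| ≤ s := hSb _ (hIcc_sub n h1 h2 ((hl n h1 h2).2.mapsTo hq1))
      have : (ifsW S b h l n q).2 - f ((ifsW S b h l n q).1)
          = S (l n q.1) * (q.2 - f q.1) := by
        simp only [ifsW]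
        rw [hkq]; ring
      rw [this, abs_mul]
      calc |S (l n q.1)| * |q.2 - f q.1| ≤ s * (s ^ k * M) :=
            mul_le_mul hSle (ih q hq) (abs_nonneg _) hs0
        _ = s ^ (k + 1) * M := by ring
  -- horizontal density
  have hhor : ∀ (B : Set (ℝ × ℝ)), B.Nonempty → B ⊆ Icc (X 0) (X N) ×ˢ univ → ∀ k,
      ∀ x ∈ Icc (X 0) (X N), ∃ p ∈ (ifsWSet S b h l N)^[k] B,
      |p.1 - x| ≤ lamL ^ k * (X N - X 0) := by
    intro B hBne hB k
    induction k with
    | zero =>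
      intro x hx
      obtain ⟨p, hp⟩ := hBne
      refine ⟨p, by simpa using hp, ?_⟩
      have hp1 := (hB hp).1
      rw [pow_zero, one_mul, abs_le]
      constructor <;> [linarith [hp1.1, hx.2]; linarith [hp1.2, hx.1]]
    | succ k ih =>
      intro x hx
      have hpre : ∃ n, 1 ≤ n ∧ n ≤ N ∧ ∃ x' ∈ Icc (X 0) (X N), l n x' = x := by
        rcases eq_or_lt_of_le hx.2 with hXe | hXl
        · obtain ⟨z, hz, hz2⟩ := (hl N (by omega) le_rfl).2.surjOn
            (⟨Xle (N-1) N (by omega) le_rfl, le_rfl⟩ : X N ∈ Icc (X (N-1)) (X N))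
          exact ⟨N, by omega, le_rfl, z, hz, by rw [hz2, hXe]⟩
        · obtain ⟨n, h1, h2, h3, h4⟩ := hcover x hx.1 hXl
          obtain ⟨z, hz, hz2⟩ := (hl n h1 h2).2.surjOn ⟨h3, h4.le⟩
          exact ⟨n, h1, h2, z, hz, hz2⟩
      obtain ⟨n, h1, h2, x', hx'I, hlx'⟩ := hpre
      obtain ⟨q, hq, hqd⟩ := ih x' hx'I
      refine ⟨ifsW S b h l n q, ?_, ?_⟩
      · rw [Function.iterate_succ_apply']
        exact (memW _ _).mpr ⟨n, h1, h2, q, hq, rfl⟩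
      · have hq1 : q.1 ∈ Icc (X 0) (X N) := (hinv B hB k hq).1
        have := hlipL n h1 h2 q.1 hq1 x' hx'I
        calc |(ifsW S b h l n q).1 - x| = |l n q.1 - l n x'| := by
              simp only [ifsW]; rw [hlx']
          _ ≤ lamL * |q.1 - x'| := this
          _ ≤ lamL * (lamL ^ k * (X N - X 0)) := by
              exact mul_le_mul_of_nonneg_left hqd hlamL0
          _ = lamL ^ (k + 1) * (X N - X 0) := by ring
  -- the graph and its properties
  have hΓeq : {p : ℝ × ℝ | p.1 ∈ Icc (X 0) (X N) ∧ p.2 = f p.1}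
      = (fun x => (x, f x)) '' Icc (X 0) (X N) := by
    ext p
    constructor
    · rintro ⟨h1, h2⟩; exact ⟨p.1, h1, by simp [← h2]⟩
    · rintro ⟨x, hx, rfl⟩; exact ⟨hx, rfl⟩
  have hΓc : IsCompact {p : ℝ × ℝ | p.1 ∈ Icc (X 0) (X N) ∧ p.2 = f p.1} := by
    rw [hΓeq]
    exact isCompact_Icc.image_of_continuousOn (continuousOn_id.prodMk hfC)
  have hΓne : Set.Nonempty {p : ℝ × ℝ | p.1 ∈ Icc (X 0) (X N) ∧ p.2 = f p.1} :=
    ⟨(X 0, f (X 0)), hX0I, rfl⟩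
  -- part 1 : invariance of the graph
  have part1 : ifsWSet S b h l N {p : ℝ × ℝ | p.1 ∈ Icc (X 0) (X N) ∧ p.2 = f p.1} =
      {p : ℝ × ℝ | p.1 ∈ Icc (X 0) (X N) ∧ p.2 = f p.1} := by
    apply Set.Subset.antisymm
    · intro p hp
      obtain ⟨n, h1, h2, q, ⟨hq1, hq2⟩, rfl⟩ := (memW _ p).mp hp
      refine ⟨hIcc_sub n h1 h2 ((hl n h1 h2).2.mapsTo hq1), ?_⟩
      show h (l n q.1) + S (l n q.1) * (q.2 - b q.1) = f (l n q.1)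
      rw [hq2, hkey n h1 h2 q.1 hq1]
    · rintro ⟨x, y⟩ ⟨hx, hy⟩
      simp only [Set.mem_setOf_eq] at hx hy ⊢
      have hpre : ∃ n, 1 ≤ n ∧ n ≤ N ∧ l n (L x) = x := by
        rcases eq_or_lt_of_le hx.2 with hXe | hXl
        · exact ⟨N, by omega, le_rfl, by rw [hXe]; exact hLN⟩
        · obtain ⟨n, h1, h2, h3, h4⟩ := hcover x hx.1 hXl
          exact ⟨n, h1, h2, hL n h1 h2 x ⟨h3, h4⟩⟩
      obtain ⟨n, h1, h2, hlx⟩ := hpre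
      have hLxI : L x ∈ Icc (X 0) (X N) := hLI hx
      refine (memW _ _).mpr ⟨n, h1, h2, (L x, f (L x)), ⟨hLxI, rfl⟩, ?_⟩
      have hfx := hfix x hx
      simp only [RBop] at hfx
      simp only [ifsW, hlx]
      rw [hy, ← hfx]
  -- nonemptiness of iterates
  have hWne : ∀ (B : Set (ℝ × ℝ)), B.Nonempty → ∀ k,
      ((ifsWSet S b h l N)^[k] B).Nonempty := by
    intro B hBne k
    induction k with
    | zero => simpa using hBne
    | succ k ih =>
      rw [Function.iterate_succ_apply']
      obtain ⟨q, hq⟩ := ih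
      exact ⟨ifsW S b h l N q, (memW _ _).mpr ⟨N, by omega, le_rfl, q, hq, rfl⟩⟩
  -- part 2 : attraction
  have part2 : ∀ B : Set (ℝ × ℝ), B.Nonempty → IsCompact B → B ⊆ Icc (X 0) (X N) ×ˢ univ →
      Tendsto (fun k => hausdorffDist ((ifsWSet S b h l N)^[k] B)
        {p : ℝ × ℝ | p.1 ∈ Icc (X 0) (X N) ∧ p.2 = f p.1}) atTop (nhds 0) := by
    intro B hBne hBc hBsub
    -- a bound on the vertical distance on B
    have hMex : ∃ M : ℝ, 0 ≤ M ∧ ∀ p ∈ B, |p.2 - f p.1| ≤ M := by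
      have hcont : ContinuousOn (fun p : ℝ × ℝ => p.2 - f p.1) B := by
        apply ContinuousOn.sub continuous_snd.continuousOn
        exact hfC.comp continuous_fst.continuousOn fun p hp => (hBsub hp).1
      obtain ⟨C, hC⟩ := hBc.exists_bound_of_continuousOn hcont
      exact ⟨max C 0, le_max_right _ _, fun p hp =>
        le_trans (by simpa [Real.norm_eq_abs] using hC p hp) (le_max_left _ _)⟩
    obtain ⟨M, hM0, hMb⟩ := hMex
    rw [Metric.tendsto_atTop]
    intro ε hε
    -- uniform continuity of f
    obtain ⟨δ, hδ0, hδ⟩ := Metric.uniformContinuousOn_iff.mp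
      (isCompact_Icc.uniformContinuousOn_of_continuous hfC) (ε / 4) (by linarith)
    have t1 : Tendsto (fun k => s ^ k * M) atTop (nhds 0) := by
      simpa using (tendsto_pow_atTop_nhds_zero_of_lt_one hs0 hs).mul_const M
    have t2 : Tendsto (fun k => lamL ^ k * (X N - X 0)) atTop (nhds 0) := by
      simpa using (tendsto_pow_atTop_nhds_zero_of_lt_one hlamL0 hlamL1).mul_const (X N - X 0)
    obtain ⟨K1, hK1⟩ := (Metric.tendsto_atTop.mp t1) (ε / 4) (by linarith)
    obtain ⟨K2, hK2⟩ := (Metric.tendsto_atTop.mp t2) (min δ (ε / 4)) (lt_min hδ0 (by linarith))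
    refine ⟨max K1 K2, fun k hk => ?_⟩
    have hb1 : s ^ k * M < ε / 4 := by
      have := hK1 k (le_trans (le_max_left _ _) hk)
      rw [Real.dist_eq, sub_zero] at this
      calc s ^ k * M ≤ |s ^ k * M| := le_abs_self _
        _ < ε / 4 := this
    have hb2 : lamL ^ k * (X N - X 0) < min δ (ε / 4) := by
      have := hK2 k (le_trans (le_max_right _ _) hk)
      rw [Real.dist_eq, sub_zero] at this
      calc lamL ^ k * (X N - X 0) ≤ |lamL ^ k * (X N - X 0)| := le_abs_self _
        _ < min δ (ε / 4) := this
    have hD : hausdorffDist ((ifsWSet S b h l N)^[k] B)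
        {p : ℝ × ℝ | p.1 ∈ Icc (X 0) (X N) ∧ p.2 = f p.1} ≤ 3 * ε / 4 := by
      apply hausdorffDist_le_of_mem_dist (by linarith)
      · intro p hp
        have hp1 : p.1 ∈ Icc (X 0) (X N) := (hinv B hBsub k hp).1
        refine ⟨(p.1, f p.1), ⟨hp1, rfl⟩, ?_⟩
        have := hvert B hBsub M hMb k p hp
        rw [Prod.dist_eq]
        simp only [Real.dist_eq, sub_self, abs_zero]
        rw [max_le_iff]
        constructor
        · linarith
        · linarith
      · rintro ⟨x, y⟩ ⟨hxI, hyf⟩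
        simp only [Set.mem_setOf_eq] at hxI hyf
        obtain ⟨p, hp, hpd⟩ := hhor B hBne hBsub k x hxI
        refine ⟨p, hp, ?_⟩
        have hp1 : p.1 ∈ Icc (X 0) (X N) := (hinv B hBsub k hp).1
        have hvd := hvert B hBsub M hMb k p hp
        have hxd : |x - p.1| < δ := by
          rw [abs_sub_comm]
          exact lt_of_le_of_lt hpd (lt_of_lt_of_le hb2 (min_le_left _ _))
        have hfd : |f x - f p.1| < ε / 4 := by
          have := hδ x hxI p.1 hp1 (by rwa [Real.dist_eq])
          rwa [Real.dist_eq] at this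
        rw [Prod.dist_eq, max_le_iff]
        constructor
        · rw [Real.dist_eq, abs_sub_comm]
          have := lt_of_le_of_lt hpd (lt_of_lt_of_le hb2 (min_le_right _ _))
          linarith
        · rw [Real.dist_eq, hyf]
          calc |f x - p.2| ≤ |f x - f p.1| + |f p.1 - p.2| := abs_sub_le _ _ _
            _ ≤ ε / 4 + s ^ k * M := by
                rw [abs_sub_comm (f p.1)]
                exact add_le_add hfd.le hvd
            _ ≤ 3 * ε / 4 := by linarith
    rw [Real.dist_eq, sub_zero, abs_of_nonneg hausdorffDist_nonneg]
    linarith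
  refine ⟨part1, part2, ?_⟩
  -- part 3 : uniqueness
  intro A hAne hAc hAsub hAinv _hbasin
  have hiter : ∀ k, (ifsWSet S b h l N)^[k] A = A := by
    intro k
    induction k with
    | zero => rfl
    | succ k ih => rw [Function.iterate_succ_apply', ih, hAinv]
  have hT := part2 A hAne hAc hAsub
  simp only [hiter] at hT
  have hzero : hausdorffDist A {p : ℝ × ℝ | p.1 ∈ Icc (X 0) (X N) ∧ p.2 = f p.1} = 0 :=
    tendsto_nhds_unique tendsto_const_nhds hT
  have hne := hausdorffEdist_ne_top_of_nonempty_of_bounded hAne hΓne hAc.isBounded hΓc.isBounded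
  exact (IsClosed.hausdorffDist_zero_iff_eq hAc.isClosed hΓc.isClosed hne).mp hzero
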